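/- Let n ∈ {3, 4, 6}, let K be a number field whose degree over Q is 1 or a prime number, and let a, b ∈ K with 4a^3 + 27b^2 ≠ 0. If the elliptic curve E: y^2 = x^3 + ax + b over K has an n-isogeny, then there exists d ∈ K^* such that the quadratic twist E^(d): y^2 = x^3 + a d^2 x + b d^3 has a K-rational point of order n. -/

import Mathlib

open WeierstrassCurve IntermediateField Module

open scoped Classical in
/-- `E(K)` contains a subgroup isomorphic to `T`. -/
def WeierstrassCurve.ContainsTorsion {K : Type*} [Field K] (E : WeierstrassCurve K)
    (T : Type) [AddCommGroup T] : Prop :=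
  ∃ φ : T →+ E.toAffine.Point, Function.Injective φ

/-- The set of `j`-invariants of elliptic curves over `K` whose Mordell-Weil group contains
a subgroup isomorphic to `T`. -/
noncomputable def torsionJSet (K : Type*) [Field K] (T : Type) [AddCommGroup T] : Set K :=
  {j | ∃ (E : WeierstrassCurve K) (hE : E.IsElliptic),
    @WeierstrassCurve.j K _ E hE = j ∧ E.ContainsTorsion T}

open scoped Classical in
/-- `E` has an `n`-isogeny over `K`: a Galois-stable cyclic subgroup of order `n`
of the points of `E` over an algebraic closure of `K`. -/
def WeierstrassCurve.HasDegIsogeny {K : Type*} [Field K] (E : WeierstrassCurve K) (n : ℕ) :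
    Prop :=
  ∃ C : AddSubgroup (E.baseChange (AlgebraicClosure K)).toAffine.Point,
    Nonempty (C ≃+ ZMod n) ∧
    ∀ (σ : AlgebraicClosure K ≃ₐ[K] AlgebraicClosure K), ∀ P ∈ C,
      WeierstrassCurve.Affine.Point.map (W' := E.toAffine) σ.toAlgHom P ∈ C

/-- The set of `j`-invariants of elliptic curves over `K` admitting an `n`-isogeny. -/
noncomputable def isogenyJSet (K : Type*) [Field K] (n : ℕ) : Set K :=
  {j | ∃ (E : WeierstrassCurve K) (hE : E.IsElliptic),
    @WeierstrassCurve.j K _ E hE = j ∧ E.HasDegIsogeny n}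

open scoped Classical in
/-- The set of `j`-invariants of elliptic curves over `K` having a point of order `n`. -/
noncomputable def pointOrderJSet (K : Type*) [Field K] (n : ℕ) : Set K :=
  {j | ∃ (E : WeierstrassCurve K) (hE : E.IsElliptic),
    @WeierstrassCurve.j K _ E hE = j ∧ ∃ P : E.toAffine.Point, addOrderOf P = n}

/-- The short Weierstrass curve `y² = x³ + ax + b`. -/
def shortW (K : Type*) [Field K] (a b : K) : WeierstrassCurve K :=
  { a₁ := 0, a₂ := 0, a₃ := 0, a₄ := a, a₆ := b }

section AuxTwist

open WeierstrassCurve WeierstrassCurve.Affine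

namespace MyTwist

variable {F : Type*} [Field F] [DecidableEq F]

/-- `W'` is obtained from `W` by scaling with `c` (variable change `u = c⁻¹`). -/
structure ScaleRel (W W' : WeierstrassCurve.Affine F) (c : F) : Prop where
  hc : c ≠ 0
  h1 : W'.a₁ = c * W.a₁
  h2 : W'.a₂ = c ^ 2 * W.a₂
  h3 : W'.a₃ = c ^ 3 * W.a₃
  h4 : W'.a₄ = c ^ 4 * W.a₄
  h6 : W'.a₆ = c ^ 6 * W.a₆

variable {W W' : WeierstrassCurve.Affine F} {c : F} (hs : ScaleRel W W' c)

include hs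

lemma ScaleRel.equation {x y : F} (h : W.Equation x y) :
    W'.Equation (c ^ 2 * x) (c ^ 3 * y) := by
  rw [equation_iff] at h ⊢
  rw [hs.h1, hs.h2, hs.h3, hs.h4, hs.h6]
  linear_combination (c ^ 6) * h

lemma ScaleRel.nonsingular {x y : F} (h : W.Nonsingular x y) :
    W'.Nonsingular (c ^ 2 * x) (c ^ 3 * y) := by
  rw [nonsingular_iff'] at h ⊢
  refine ⟨hs.equation h.1, ?_⟩
  rcases h.2 with h2 | h2
  · left
    have : W'.a₁ * (c ^ 3 * y) - (3 * (c ^ 2 * x) ^ 2 + 2 * W'.a₂ * (c ^ 2 * x) + W'.a₄) =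
        c ^ 4 * (W.a₁ * y - (3 * x ^ 2 + 2 * W.a₂ * x + W.a₄)) := by
      rw [hs.h1, hs.h2, hs.h4]; ring
    rw [this]
    exact mul_ne_zero (pow_ne_zero _ hs.hc) h2
  · right
    have : 2 * (c ^ 3 * y) + W'.a₁ * (c ^ 2 * x) + W'.a₃ =
        c ^ 3 * (2 * y + W.a₁ * x + W.a₃) := by
      rw [hs.h1, hs.h3]; ring
    rw [this]
    exact mul_ne_zero (pow_ne_zero _ hs.hc) h2

lemma ScaleRel.negY (x y : F) :
    W'.negY (c ^ 2 * x) (c ^ 3 * y) = c ^ 3 * W.negY x y := by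
  simp only [WeierstrassCurve.Affine.negY, hs.h1, hs.h3]; ring

lemma ScaleRel.slope (x₁ x₂ y₁ y₂ : F) :
    W'.slope (c ^ 2 * x₁) (c ^ 2 * x₂) (c ^ 3 * y₁) (c ^ 3 * y₂) =
      c * W.slope x₁ x₂ y₁ y₂ := by
  by_cases hx : x₁ = x₂
  · subst hx
    by_cases hy : y₁ = W.negY x₁ y₂
    · rw [slope_of_Y_eq rfl (by rw [hy, hs.negY]), slope_of_Y_eq rfl hy, mul_zero]
    · have hy' : c ^ 3 * y₁ ≠ W'.negY (c ^ 2 * x₁) (c ^ 3 * y₂) := by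
        rw [hs.negY]
        exact fun h => hy (mul_left_cancel₀ (pow_ne_zero 3 hs.hc) h)
      rw [slope_of_Y_ne rfl hy', slope_of_Y_ne rfl hy, hs.negY, hs.h1, hs.h2, hs.h4]
      by_cases hden : y₁ - W.negY x₁ y₁ = 0
      · have : c ^ 3 * y₁ - c ^ 3 * W.negY x₁ y₁ = 0 := by
          rw [← mul_sub, hden, mul_zero]
        rw [this, hden, div_zero, div_zero, mul_zero]
      · have h2 : c ^ 3 * y₁ - c ^ 3 * W.negY x₁ y₁ ≠ 0 := by
          rw [← mul_sub]
          exact mul_ne_zero (pow_ne_zero 3 hs.hc) hden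
        rw [← mul_div_assoc, div_eq_div_iff h2 hden]
        ring
  · have hx' : c ^ 2 * x₁ ≠ c ^ 2 * x₂ :=
      fun h => hx (mul_left_cancel₀ (pow_ne_zero 2 hs.hc) h)
    rw [slope_of_X_ne hx', slope_of_X_ne hx, ← mul_div_assoc,
      div_eq_div_iff (sub_ne_zero.mpr hx') (sub_ne_zero.mpr hx)]
    ring

lemma ScaleRel.addX (x₁ x₂ L : F) :
    W'.addX (c ^ 2 * x₁) (c ^ 2 * x₂) (c * L) = c ^ 2 * W.addX x₁ x₂ L := by
  simp only [WeierstrassCurve.Affine.addX, hs.h1, hs.h2]; ring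

lemma ScaleRel.negAddY (x₁ x₂ y₁ L : F) :
    W'.negAddY (c ^ 2 * x₁) (c ^ 2 * x₂) (c ^ 3 * y₁) (c * L) =
      c ^ 3 * W.negAddY x₁ x₂ y₁ L := by
  simp only [WeierstrassCurve.Affine.negAddY, hs.addX, WeierstrassCurve.Affine.addX,
    hs.h1, hs.h2]
  ring

lemma ScaleRel.addY (x₁ x₂ y₁ L : F) :
    W'.addY (c ^ 2 * x₁) (c ^ 2 * x₂) (c ^ 3 * y₁) (c * L) = c ^ 3 * W.addY x₁ x₂ y₁ L := by
  rw [WeierstrassCurve.Affine.addY, WeierstrassCurve.Affine.addY, hs.addX, hs.negAddY, hs.negY]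

open WeierstrassCurve.Affine.Point

omit hs in
lemma some_ext {x₁ y₁ x₂ y₂ : F} {h₁ : W.Nonsingular x₁ y₁} {h₂ : W.Nonsingular x₂ y₂}
    (hx : x₁ = x₂) (hy : y₁ = y₂) : Point.some _ _ h₁ = Point.some _ _ h₂ := by
  subst hx; subst hy; rfl

omit hs in
lemma some_ext' {W : WeierstrassCurve.Affine F} {x₁ y₁ x₂ y₂ : F} {h₁ : W.Nonsingular x₁ y₁}
    {h₂ : W.Nonsingular x₂ y₂}
    (hx : x₁ = x₂) (hy : y₁ = y₂) : Point.some _ _ h₁ = Point.some _ _ h₂ := by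
  subst hx; subst hy; rfl

/-- The group homomorphism on points induced by scaling. -/
noncomputable def ScaleRel.pointHom : W.Point →+ W'.Point where
  toFun := fun P => match P with
    | .zero => 0
    | Point.some x y h => Point.some _ _ (hs.nonsingular h)
  map_zero' := rfl
  map_add' := by
    rintro (_ | ⟨x₁, y₁, h₁⟩) (_ | ⟨x₂, y₂, h₂⟩)
    any_goals rfl
    by_cases hxy : x₁ = x₂ ∧ y₁ = W.negY x₂ y₂
    · have hx' : c ^ 2 * x₁ = c ^ 2 * x₂ := by rw [hxy.1]
      have hy' : c ^ 3 * y₁ = W'.negY (c ^ 2 * x₂) (c ^ 3 * y₂) := by rw [hs.negY, hxy.2]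
      rw [add_of_Y_eq hxy.1 hxy.2, add_of_Y_eq hx' hy']
    · have hxy' : x₁ = x₂ → y₁ ≠ W.negY x₂ y₂ := fun hx hy => hxy ⟨hx, hy⟩
      have hxy'' : c ^ 2 * x₁ = c ^ 2 * x₂ → c ^ 3 * y₁ ≠ W'.negY (c ^ 2 * x₂) (c ^ 3 * y₂) := by
        intro hx hy
        exact hxy' (mul_left_cancel₀ (pow_ne_zero 2 hs.hc) hx)
          (mul_left_cancel₀ (pow_ne_zero 3 hs.hc) (by rwa [hs.negY] at hy))
      rw [add_some hxy, add_some (fun h => hxy'' h.1 h.2)]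
      refine some_ext ?_ ?_
      · rw [hs.slope, hs.addX]
      · rw [hs.slope, hs.addY]

lemma ScaleRel.pointHom_zero : hs.pointHom 0 = 0 := rfl

lemma ScaleRel.pointHom_some {x y : F} (h : W.Nonsingular x y) :
    hs.pointHom (Point.some _ _ h) = Point.some _ _ (hs.nonsingular h) := rfl

lemma ScaleRel.pointHom_injective : Function.Injective hs.pointHom := by
  rw [injective_iff_map_eq_zero]
  rintro (_ | ⟨x, y, h⟩) hP
  · rfl
  · rw [hs.pointHom_some] at hP
    exact absurd hP (Point.some_ne_zero _)

end MyTwist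


lemma fixed_descent {K L : Type*} [Field K] [CharZero K] [Field L] [Algebra K L]
    [Normal K L] [Algebra.IsAlgebraic K L]
    (z : L) (hz : ∀ σ : L ≃ₐ[K] L, σ z = z) : ∃ k : K, algebraMap K L k = z := by
  have hint : IsIntegral K z := (Algebra.IsAlgebraic.isAlgebraic z).isIntegral
  have hirr := minpoly.irreducible hint
  have hsep : (minpoly K z).Separable := hirr.separable
  have hsplit : ((minpoly K z).map (algebraMap K L)).Splits := Normal.splits inferInstance z
  have hsub : (minpoly K z).rootSet L ⊆ {z} := by
    intro y hy
    have h1 : Polynomial.aeval y (minpoly K z) = 0 := Polynomial.aeval_eq_zero_of_mem_rootSet hy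
    have h2 : IsConjRoot K z y := isConjRoot_of_aeval_eq_zero hint h1
    obtain ⟨σ, hσ⟩ := h2.exists_algEquiv
    have h3 : σ y = σ z := by rw [hσ, hz σ]
    simpa using σ.injective h3
  have hcard := Polynomial.card_rootSet_eq_natDegree hsep hsplit
  have hle : Fintype.card ((minpoly K z).rootSet L) ≤ 1 :=
    Fintype.card_le_one_iff.mpr fun y₁ y₂ =>
      Subtype.ext ((hsub y₁.2).trans (hsub y₂.2).symm)
  have hdeg : (minpoly K z).natDegree = 1 :=
    le_antisymm (hcard ▸ hle) (minpoly.natDegree_pos hint)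
  have hdeg' : (minpoly K z).degree = 1 :=
    (Polynomial.degree_eq_iff_natDegree_eq (minpoly.ne_zero hint)).mpr hdeg
  obtain ⟨k, hk⟩ := minpoly.mem_range_of_degree_eq_one K z hdeg'
  exact ⟨k, hk⟩

end AuxTwist

open scoped Classical in
/-- For `n ∈ {3, 4, 6}` and a number field `K` of degree 1 or prime
degree, every elliptic curve `y² = x³ + ax + b` over `K` with an `n`-isogeny has a
quadratic twist with a `K`-rational point of order `n`. -/
theorem isogeny_gives_twist_with_torsion (n : ℕ) (hn : n ∈ ({3, 4, 6} : Set ℕ))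
    (K : Type*) [Field K] [NumberField K]
    (hdeg : Module.finrank ℚ K = 1 ∨ Nat.Prime (Module.finrank ℚ K))
    (a b : K) (hab : 4 * a ^ 3 + 27 * b ^ 2 ≠ 0)
    (hiso : (shortW K a b).HasDegIsogeny n) :
    ∃ d : K, d ≠ 0 ∧
      ∃ P : (shortW K (a * d ^ 2) (b * d ^ 3)).toAffine.Point, addOrderOf P = n := by
  clear hdeg
  have hn' : n = 3 ∨ n = 4 ∨ n = 6 := by simpa using hn
  have hn0 : n ≠ 0 := by rcases hn' with h | h | h <;> omega
  have hn1 : 3 ≤ n := by rcases hn' with h | h | h <;> omega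
  have hn2 : ¬ n ∣ 2 := by intro h; have := Nat.le_of_dvd (by norm_num) h; omega
  haveI : NeZero n := ⟨hn0⟩
  set L := AlgebraicClosure K with hL
  set W := shortW K a b with hWdef
  obtain ⟨C, ⟨e⟩, hst⟩ := hiso
  set P : C := e.symm 1 with hPdef
  set P₀ : (W.baseChange L).toAffine.Point := (P : (W.baseChange L).toAffine.Point) with hP0def
  have hP₀ord : addOrderOf P₀ = n := by
    have h1 : addOrderOf P₀ = addOrderOf P :=
      addOrderOf_injective C.subtype Subtype.coe_injective P
    have h2 := addOrderOf_injective e.symm.toAddMonoidHom e.symm.injective (1 : ZMod n)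
    rw [ZMod.addOrderOf_one] at h2
    rw [h1, hPdef]
    exact h2
  have hP₀ne : P₀ ≠ 0 := by
    intro h
    rw [h, addOrderOf_zero] at hP₀ord
    omega
  obtain ⟨x, y, hxy, hPsome⟩ :
      ∃ x, ∃ y, ∃ hxy : (W.baseChange L).toAffine.Nonsingular x y,
        P₀ = WeierstrassCurve.Affine.Point.some _ _ hxy := by
    cases hp : P₀ with
    | zero => exact absurd hp hP₀ne
    | some _ _ hxy => exact ⟨_, _, hxy, rfl⟩
  -- negY on the base-changed curve
  have hnegY : ∀ x' y' : L, (W.baseChange L).toAffine.negY x' y' = -y' := by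
    intro x' y'
    simp [WeierstrassCurve.Affine.negY, hWdef, shortW, WeierstrassCurve.baseChange,
      WeierstrassCurve.map]
  -- Galois action sends P₀ to ±P₀
  have key : ∀ σ : L ≃ₐ[K] L, σ x = x ∧ (σ y = y ∨ σ y = -y) := by
    intro σ
    set f := WeierstrassCurve.Affine.Point.map (W' := W.toAffine) σ.toAlgHom with hf
    have finj : Function.Injective f := WeierstrassCurve.Affine.Point.map_injective (W' := W.toAffine) σ.toAlgHom
    let g : C →+ C :=
      { toFun := fun Q => ⟨f Q, hst σ Q Q.2⟩
        map_zero' := by ext; simp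
        map_add' := fun Q R => by ext; simp }
    have ginj : Function.Injective g := by
      intro Q R h
      exact Subtype.ext (finj (congrArg Subtype.val h))
    let t : ZMod n →+ ZMod n :=
      e.toAddMonoidHom.comp (g.comp e.symm.toAddMonoidHom)
    have tinj : Function.Injective t := by
      simp only [t, AddMonoidHom.coe_comp]
      exact e.injective.comp (ginj.comp e.symm.injective)
    have tsurj : Function.Surjective t := Finite.surjective_of_injective tinj
    have hmul : ∀ u : ZMod n, t u = u * t 1 := by
      intro u
      conv_lhs => rw [← ZMod.natCast_zmod_val u]
      rw [show ((u.val : ZMod n)) = u.val • (1 : ZMod n) by rw [nsmul_eq_mul, mul_one],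
        map_nsmul, nsmul_eq_mul, ZMod.natCast_zmod_val]
    obtain ⟨w, hw⟩ := tsurj 1
    rw [hmul w] at hw
    have huniv : ∀ u w : ZMod n, w * u = 1 → u = 1 ∨ u = -1 := by
      rcases hn' with rfl | rfl | rfl <;> decide
    have hu : t 1 = 1 ∨ t 1 = -1 := huniv _ w hw
    -- translate to statement about f P₀
    have ht1 : t 1 = e ⟨f P₀, hst σ P₀ P.2⟩ := rfl
    have hfP : f P₀ = P₀ ∨ f P₀ = -P₀ := by
      rcases hu with hu | hu
      · left
        have : (⟨f P₀, hst σ P₀ P.2⟩ : C) = P := by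
          apply e.injective
          rw [← ht1, hu, hPdef]
          simp
        exact congrArg Subtype.val this
      · right
        have : (⟨f P₀, hst σ P₀ P.2⟩ : C) = -P := by
          apply e.injective
          rw [← ht1, hu, hPdef]
          simp
        have h2 := congrArg Subtype.val this
        simpa using h2
    have hfPsome : f P₀ = WeierstrassCurve.Affine.Point.some _ _
        ((WeierstrassCurve.Affine.baseChange_nonsingular W.toAffine σ.toAlgHom.injective x y).mpr hxy) := by
      rw [hPsome, hf, WeierstrassCurve.Affine.Point.map_some]
    rcases hfP with h | h
    · rw [hfPsome, hPsome, WeierstrassCurve.Affine.Point.some.injEq] at h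
      exact ⟨h.1, Or.inl h.2⟩
    · rw [hfPsome, hPsome, WeierstrassCurve.Affine.Point.neg_some,
        WeierstrassCurve.Affine.Point.some.injEq] at h
      rw [hnegY x y] at h
      exact ⟨h.1, Or.inr h.2⟩
  have hxfix : ∀ σ : L ≃ₐ[K] L, σ x = x := fun σ => (key σ).1
  have hy2fix : ∀ σ : L ≃ₐ[K] L, σ (y ^ 2) = y ^ 2 := by
    intro σ
    rcases (key σ).2 with h | h <;> rw [map_pow, h] <;> ring
  obtain ⟨x₀, hx₀⟩ := fixed_descent x hxfix
  obtain ⟨d, hd⟩ := fixed_descent (y ^ 2) hy2fix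
  -- y ≠ 0
  have hy0 : y ≠ 0 := by
    intro h0
    have h2 : P₀ + P₀ = 0 := by
      rw [hPsome]
      exact WeierstrassCurve.Affine.Point.add_self_of_Y_eq (by rw [hnegY, h0, neg_zero])
    have hdvd : addOrderOf P₀ ∣ 2 :=
      addOrderOf_dvd_of_nsmul_eq_zero (by rw [two_nsmul, h2])
    rw [hP₀ord] at hdvd
    exact hn2 hdvd
  have hd0 : d ≠ 0 := by
    intro h
    rw [h, map_zero] at hd
    exact hy0 (pow_eq_zero_iff (by norm_num) |>.mp hd.symm)
  -- the Weierstrass equation over L in short form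
  have heqL : y ^ 2 = x ^ 3 + algebraMap K L a * x + algebraMap K L b := by
    have h := hxy.1
    rw [WeierstrassCurve.Affine.equation_iff] at h
    simpa [hWdef, shortW, WeierstrassCurve.baseChange, WeierstrassCurve.map] using h
  have hd_eq : d = x₀ ^ 3 + a * x₀ + b := by
    apply (algebraMap K L).injective
    rw [hd, map_add, map_add, map_mul, map_pow, hx₀, heqL]
  set W' := shortW K (a * d ^ 2) (b * d ^ 3) with hW'def
  have hQeq : W'.toAffine.Equation (d * x₀) (d ^ 2) := by
    rw [WeierstrassCurve.Affine.equation_iff]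
    simp only [hW'def, shortW]
    ring_nf
    linear_combination (d ^ 3) * hd_eq
  have hΔ : W'.toAffine.Δ ≠ 0 := by
    have hΔeq : W'.Δ = -16 * (d ^ 6 * (4 * a ^ 3 + 27 * b ^ 2)) := by
      simp only [WeierstrassCurve.Δ, WeierstrassCurve.b₂, WeierstrassCurve.b₄,
        WeierstrassCurve.b₆, WeierstrassCurve.b₈, hW'def, shortW]
      ring
    rw [hΔeq]
    refine mul_ne_zero (by norm_num) (mul_ne_zero (pow_ne_zero _ hd0) hab)
  have hQns := (WeierstrassCurve.Affine.equation_iff_nonsingular_of_Δ_ne_zero hΔ).mp hQeq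
  refine ⟨d, hd0, WeierstrassCurve.Affine.Point.some _ _ hQns, ?_⟩
  -- scale relation over L between base changes
  have hs : MyTwist.ScaleRel (W.baseChange L).toAffine (W'.baseChange L).toAffine y := by
    refine ⟨hy0, ?_, ?_, ?_, ?_, ?_⟩ <;>
      simp only [hWdef, hW'def, shortW, WeierstrassCurve.baseChange, WeierstrassCurve.map,
        map_zero, map_mul, map_pow, hd] <;> ring
  have hβQ : WeierstrassCurve.Affine.Point.baseChange (W' := W') K L
        (WeierstrassCurve.Affine.Point.some _ _ hQns) = hs.pointHom P₀ := by
    rw [hPsome, hs.pointHom_some]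
    refine MyTwist.some_ext' ?_ ?_
    · show algebraMap K L (d * x₀) = y ^ 2 * x
      rw [map_mul, hd, hx₀]
    · show algebraMap K L (d ^ 2) = y ^ 3 * y
      rw [map_pow, hd]
      ring
  calc addOrderOf (WeierstrassCurve.Affine.Point.some _ _ hQns)
      = addOrderOf (WeierstrassCurve.Affine.Point.baseChange (W' := W') K L
          (WeierstrassCurve.Affine.Point.some _ _ hQns)) :=
        (addOrderOf_injective _ (WeierstrassCurve.Affine.Point.map_injective (W' := W') _) _).symm
    _ = addOrderOf (hs.pointHom P₀) := by rw [hβQ]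
    _ = addOrderOf P₀ := addOrderOf_injective _ hs.pointHom_injective _
    _ = n := hP₀ord
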